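/- Let (A,*) be a nonzero normal symmetric triality algebra with skew-symmetric map δ : A×A → stri(A,*). Then the space g(A,*) = t ⊕ ι₀(A) ⊕ ι₁(A) ⊕ ι₂(A), where t = Σ_{i=0}^{2} θ^i(δ(A,A)) ⊆ stri(A,*), with the anticommutative bracket defined by: t a subalgebra of stri(A,*), [(d₀,d₁,d₂), ι_i(x)] = ι_i(d_i(x)), [ι_i(x), ι_{i+1}(y)] = ι_{i+2}(x*y), and [ι_i(x), ι_i(y)] = θ^i(δ(x,y)), is a Lie algebra (the Jacobi identity holds). -/

import Mathlib

/-- The underlying space of `g(A,*) = t ⊕ ι₀(A) ⊕ ι₁(A) ⊕ ι₂(A)`: a pair consisting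
of a triple of endomorphisms (the `t`-component, inside `gl(A)³`) and a triple of
elements of `A` (the components `ι₀, ι₁, ι₂`). -/
abbrev gSpace (F : Type*) [Field F] (A : Type*) [AddCommGroup A] [Module F A] :=
  (ZMod 3 → Module.End F A) × (ZMod 3 → A)

/-- The anticommutative bracket on `g(A,*)`: `t` is a subalgebra of `stri(A,*)`,
`[(d₀,d₁,d₂), ιᵢ(x)] = ιᵢ(dᵢ(x))`, `[ιᵢ(x), ιᵢ₊₁(y)] = ιᵢ₊₂(x*y)` and
`[ιᵢ(x), ιᵢ(y)] = θ^i(δ(x,y))`. -/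
def gBracket {F : Type*} [Field F] {A : Type*} [AddCommGroup A] [Module F A]
    (mul : A →ₗ[F] A →ₗ[F] A) (δ : ZMod 3 → A →ₗ[F] A →ₗ[F] Module.End F A)
    (u v : gSpace F A) : gSpace F A :=
  (⁅u.1, v.1⁆ + fun j => ∑ i : ZMod 3, δ (j - i) (u.2 i) (v.2 i),
   fun k => u.1 k (v.2 k) - v.1 k (u.2 k)
     + mul (u.2 (k + 1)) (v.2 (k + 2)) - mul (v.2 (k + 1)) (u.2 (k + 2)))

/-- The subspace `t = θ⁰(δ(A,A)) + θ¹(δ(A,A)) + θ²(δ(A,A))`. -/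
def tSpan (F : Type*) [Field F] (A : Type*) [AddCommGroup A] [Module F A]
    (δ : ZMod 3 → A →ₗ[F] A →ₗ[F] Module.End F A) :
    Submodule F (ZMod 3 → Module.End F A) :=
  Submodule.span F {w | ∃ (i : ZMod 3) (x y : A), w = fun j => δ (j - i) x y}

section assoc
attribute [local instance] LieRing.ofAssociativeRing

private lemma sum3 {M : Type*} [AddCommMonoid M] (f : ZMod 3 → M) :
    ∑ i, f i = f 0 + f 1 + f 2 := Fin.sum_univ_three f

private lemma jac3 {L : Type*} [LieRing L] (x y z : L) :
    ⁅⁅x, y⁆, z⁆ + ⁅⁅y, z⁆, x⁆ + ⁅⁅z, x⁆, y⁆ = 0 := by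
  have a1 : ⁅⁅x, y⁆, z⁆ = -⁅z, ⁅x, y⁆⁆ := (lie_skew _ _).symm
  have a2 : ⁅⁅y, z⁆, x⁆ = -⁅x, ⁅y, z⁆⁆ := (lie_skew _ _).symm
  have a3 : ⁅⁅z, x⁆, y⁆ = -⁅y, ⁅z, x⁆⁆ := (lie_skew _ _).symm
  linear_combination (norm := abel) a1 + a2 + a3 - lie_jacobi x y z

private lemma zcases : ∀ k : ZMod 3, k = 0 ∨ k = 1 ∨ k = 2 := by decide
private lemma z01 : (0:ZMod 3) + 1 = 1 := rfl
private lemma z02 : (0:ZMod 3) + 2 = 2 := rfl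
private lemma z11 : (1:ZMod 3) + 1 = 2 := rfl
private lemma z12 : (1:ZMod 3) + 2 = 0 := rfl
private lemma z21 : (2:ZMod 3) + 1 = 0 := rfl
private lemma z22 : (2:ZMod 3) + 2 = 1 := rfl
private lemma w01 : (0:ZMod 3) - 1 = 2 := rfl
private lemma w02 : (0:ZMod 3) - 2 = 1 := rfl
private lemma w11 : (1:ZMod 3) - 1 = 0 := rfl
private lemma w12 : (1:ZMod 3) - 2 = 2 := rfl
private lemma w21 : (2:ZMod 3) - 1 = 1 := rfl
private lemma w22 : (2:ZMod 3) - 2 = 0 := rfl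
private lemma zE : ∀ k : ZMod 3, k - 1 = k + 2 := by decide
private lemma zF : ∀ k : ZMod 3, k - 2 = k + 1 := by decide
private lemma zG : ∀ k : ZMod 3, k + 2 + 2 = k + 1 := by decide
private lemma zH : ∀ k : ZMod 3, k + 2 + 1 = k := by decide
private lemma zI : ∀ k : ZMod 3, k + 1 + 1 = k + 2 := by decide
private lemma zJ : ∀ k : ZMod 3, k + 1 + 2 = k := by decide
private lemma zM : ∀ j : ZMod 3, j - (j + 2) = 1 := by decide
private lemma zN : ∀ j : ZMod 3, j - (j + 1) = 2 := by decide
private lemma zK : ∀ j i : ZMod 3, j - i + 1 = j + 1 - i := by decide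
private lemma zL : ∀ j i : ZMod 3, j - i + 2 = j + 2 - i := by decide

section main
variable
    {F : Type*} [Field F]
    {A : Type*} [AddCommGroup A] [Module F A]
    (mul : A →ₗ[F] A →ₗ[F] A)
    (δ : ZMod 3 → A →ₗ[F] A →ₗ[F] Module.End F A)

private lemma tri_of_mem
    (htri : ∀ (i : ZMod 3) (x y u v : A),
      δ i x y (mul u v) = mul (δ (i + 1) x y u) v + mul u (δ (i + 2) x y v))
    {T : ZMod 3 → Module.End F A} (hT : T ∈ tSpan F A δ) :
    ∀ (j : ZMod 3) (x y : A),
      T j (mul x y) = mul (T (j + 1) x) y + mul x (T (j + 2) y) := by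
  induction hT using Submodule.span_induction with
  | mem w hw =>
    obtain ⟨i, a, b, rfl⟩ := hw
    intro j x y
    have h := htri (j - i) a b x y
    rw [zK, zL] at h
    exact h
  | zero => intro j x y; simp
  | add p q hp hq ihp ihq =>
    intro j x y
    simp only [Pi.add_apply, LinearMap.add_apply, ihp, ihq, map_add]
    abel
  | smul c p hp ihp =>
    intro j x y
    simp only [Pi.smul_apply, LinearMap.smul_apply, ihp, map_smul, smul_add]

private lemma der_of_mem
    (hi : ∀ (i j : ZMod 3) (a b x y : A),
      ⁅δ i a b, δ j x y⁆ = δ j (δ (i - j) a b x) y + δ j x (δ (i - j) a b y))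
    {T : ZMod 3 → Module.End F A} (hT : T ∈ tSpan F A δ) :
    ∀ (j j' : ZMod 3) (x y : A),
      ⁅T j', δ j x y⁆ = δ j (T (j' - j) x) y + δ j x (T (j' - j) y) := by
  induction hT using Submodule.span_induction with
  | mem w hw =>
    obtain ⟨i, a, b, rfl⟩ := hw
    intro j j' x y
    have h := hi (j' - i) j a b x y
    rw [sub_right_comm] at h
    exact h
  | zero => intro j j' x y; simp
  | add p q hp hq ihp ihq =>
    intro j j' x y
    simp only [Pi.add_apply, LinearMap.add_apply, add_lie, ihp, ihq, map_add]
    abel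
  | smul c p hp ihp =>
    intro j j' x y
    simp only [Pi.smul_apply, LinearMap.smul_apply, smul_lie, ihp, map_smul, smul_add]

end main

end assoc

set_option maxHeartbeats 2000000 in
/-- For a nonzero normal symmetric triality algebra `(A,*)`, the bracket on
`g(A,*) = t ⊕ ι₀(A) ⊕ ι₁(A) ⊕ ι₂(A)` is closed on `g(A,*)`, anticommutative,
and satisfies the Jacobi identity: `g(A,*)` is a Lie algebra. -/
theorem stmt11
    (F : Type*) [Field F] (hchar : (2 : F) ≠ 0)
    (A : Type*) [AddCommGroup A] [Module F A] [Nontrivial A]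
    (mul : A →ₗ[F] A →ₗ[F] A)
    (δ : ZMod 3 → A →ₗ[F] A →ₗ[F] Module.End F A)
    (hskew : ∀ (i : ZMod 3) (x y : A), δ i x y = - δ i y x)
    (htri : ∀ (i : ZMod 3) (x y u v : A),
      δ i x y (mul u v) = mul (δ (i + 1) x y u) v + mul u (δ (i + 2) x y v))
    (hi : ∀ (i j : ZMod 3) (a b x y : A),
      ⁅δ i a b, δ j x y⁆ = δ j (δ (i - j) a b x) y + δ j x (δ (i - j) a b y))
    (hii : ∀ x y z : A, δ 0 x (mul y z) + δ 2 y (mul z x) + δ 1 z (mul x y) = 0)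
    (hiii : ∀ x y z : A, δ 0 x y z + δ 0 y z x + δ 0 z x y = 0)
    (hiv : ∀ x y z : A, δ 1 x y z = mul (mul x z) y - mul (mul y z) x)
    (hv : ∀ x y z : A, δ 2 x y z = mul y (mul z x) - mul x (mul z y)) :
    (∀ u v : gSpace F A, u.1 ∈ tSpan F A δ → v.1 ∈ tSpan F A δ →
      (gBracket mul δ u v).1 ∈ tSpan F A δ) ∧
    (∀ u v : gSpace F A, gBracket mul δ u v = - gBracket mul δ v u) ∧
    (∀ u v w : gSpace F A,
      u.1 ∈ tSpan F A δ → v.1 ∈ tSpan F A δ → w.1 ∈ tSpan F A δ →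
      gBracket mul δ (gBracket mul δ u v) w + gBracket mul δ (gBracket mul δ v w) u
        + gBracket mul δ (gBracket mul δ w u) v = 0) := by
  letI : LieRing (Module.End F A) := LieRing.ofAssociativeRing
  letI : LieRing (ZMod 3 → Module.End F A) := LieRing.ofAssociativeRing
  have hc : ∀ (m : ZMod 3) (x y z : A),
      δ m x (mul y z) + δ (m + 2) y (mul z x) + δ (m + 1) z (mul x y) = 0 := by
    intro m x y z
    rcases zcases m with rfl | rfl | rfl
    · simp only [z01, z02]; linear_combination (norm := abel) hii x y z
    · simp only [z11, z12]; linear_combination (norm := abel) hii y z x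
    · simp only [z21, z22]; linear_combination (norm := abel) hii z x y
  have hii2 : ∀ (k : ZMod 3) (x y z : A),
      δ k (mul x y) z + δ (k + 2) (mul y z) x + δ (k + 1) (mul z x) y = 0 := by
    intro k x y z
    have h := hc (k + 2) x y z
    rw [zG, zH, hskew (k + 2) x (mul y z), hskew (k + 1) y (mul z x),
      hskew k z (mul x y)] at h
    linear_combination (norm := abel) -h
  -- closure
  have closure : ∀ u v : gSpace F A, u.1 ∈ tSpan F A δ → v.1 ∈ tSpan F A δ →
      (gBracket mul δ u v).1 ∈ tSpan F A δ := by
    rintro ⟨U, fu⟩ ⟨V, fv⟩ hu hv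
    simp only at hu hv
    show (⁅U, V⁆ + fun j => ∑ i : ZMod 3, δ (j - i) (fu i) (fv i)) ∈ tSpan F A δ
    apply Submodule.add_mem
    · induction hv using Submodule.span_induction with
      | mem w hw =>
        obtain ⟨n, x, y, rfl⟩ := hw
        have he : ⁅U, fun j => δ (j - n) x y⁆ =
            (fun j => δ (j - n) (U n x) y) + (fun j => δ (j - n) x (U n y)) := by
          funext j
          have h := der_of_mem δ hi hu (j - n) j x y
          rw [sub_sub_cancel] at h
          exact h
        rw [he]
        exact Submodule.add_mem _ (Submodule.subset_span ⟨n, U n x, y, rfl⟩)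
          (Submodule.subset_span ⟨n, x, U n y, rfl⟩)
      | zero => simpa using Submodule.zero_mem _
      | add p q hp hq ihp ihq => rw [lie_add]; exact Submodule.add_mem _ ihp ihq
      | smul c p hp ihp => rw [lie_smul]; exact Submodule.smul_mem _ _ ihp
    · have he : (fun j => ∑ i : ZMod 3, δ (j - i) (fu i) (fv i))
          = ∑ i : ZMod 3, (fun j => δ (j - i) (fu i) (fv i)) := by
        funext j; rw [Finset.sum_apply]
      rw [he]
      exact Submodule.sum_mem _ fun i _ =>
        Submodule.subset_span ⟨i, fu i, fv i, rfl⟩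
  refine ⟨closure, ?_, ?_⟩
  · -- anticommutativity
    intro u v
    refine Prod.ext ?_ ?_
    · show (⁅u.1, v.1⁆ + fun j => ∑ i : ZMod 3, δ (j - i) (u.2 i) (v.2 i))
        = -(⁅v.1, u.1⁆ + fun j => ∑ i : ZMod 3, δ (j - i) (v.2 i) (u.2 i))
      funext j
      simp only [Pi.add_apply, Pi.neg_apply, LieRing.lie_apply, neg_add]
      congr 1
      · exact (lie_skew _ _).symm
      · rw [← Finset.sum_neg_distrib]
        exact Finset.sum_congr rfl fun i _ => hskew _ _ _
    · funext k
      show u.1 k (v.2 k) - v.1 k (u.2 k)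
          + mul (u.2 (k + 1)) (v.2 (k + 2)) - mul (v.2 (k + 1)) (u.2 (k + 2))
        = -(v.1 k (u.2 k) - u.1 k (v.2 k)
          + mul (v.2 (k + 1)) (u.2 (k + 2)) - mul (u.2 (k + 1)) (v.2 (k + 2)))
      abel
  · -- Jacobi
    intro u v w hmu hmv hmw
    obtain ⟨T, f⟩ := u
    obtain ⟨S, g⟩ := v
    obtain ⟨R, h⟩ := w
    simp only at hmu hmv hmw
    have PT := tri_of_mem mul δ htri hmu
    have PS := tri_of_mem mul δ htri hmv
    have PR := tri_of_mem mul δ htri hmw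
    have DT := der_of_mem δ hi hmu
    have DS := der_of_mem δ hi hmv
    have DR := der_of_mem δ hi hmw
    have DTL : ∀ (j j' : ZMod 3) (x y : A),
        ⁅δ j x y, T j'⁆ = -(δ j (T (j' - j) x) y) - δ j x (T (j' - j) y) := by
      intro j j' x y; rw [← lie_skew, DT j j' x y]; abel
    have DSL : ∀ (j j' : ZMod 3) (x y : A),
        ⁅δ j x y, S j'⁆ = -(δ j (S (j' - j) x) y) - δ j x (S (j' - j) y) := by
      intro j j' x y; rw [← lie_skew, DS j j' x y]; abel
    have DRL : ∀ (j j' : ZMod 3) (x y : A),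
        ⁅δ j x y, R j'⁆ = -(δ j (R (j' - j) x) y) - δ j x (R (j' - j) y) := by
      intro j j' x y; rw [← lie_skew, DR j j' x y]; abel
    refine Prod.ext ?_ ?_
    · -- first component
      show (gBracket mul δ (gBracket mul δ (T, f) (S, g)) (R, h)).1
          + (gBracket mul δ (gBracket mul δ (S, g) (R, h)) (T, f)).1
          + (gBracket mul δ (gBracket mul δ (R, h) (T, f)) (S, g)).1 = 0
      funext j
      simp only [gBracket, Pi.add_apply, Pi.zero_apply, LieRing.lie_apply, sum3,
        map_add, map_sub, LinearMap.add_apply, LinearMap.sub_apply,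
        add_lie, sub_lie, lie_add, lie_sub,
        z01, z02, z11, z12, z21, z22, sub_zero, sub_self, sub_sub_cancel,
        DTL, DSL, DRL, zE, zF, zM, zN]
      have K1 := hii2 j (f 1) (g 2) (h 0)
      have K2 := hii2 (j + 2) (f 2) (g 0) (h 1)
      rw [zG, zH] at K2
      have K3 := hii2 (j + 1) (f 0) (g 1) (h 2)
      rw [zI, zJ] at K3
      have K4 := hii2 j (g 1) (f 2) (h 0)
      have K5 := hii2 (j + 2) (g 2) (f 0) (h 1)
      rw [zG, zH] at K5
      have K6 := hii2 (j + 1) (g 0) (f 1) (h 2)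
      rw [zI, zJ] at K6
      linear_combination (norm := abel) jac3 (T j) (S j) (R j)
        + K1 + K2 + K3 - K4 - K5 - K6
        - hskew j (h 0) (S 0 (f 0)) - hskew (j + 2) (h 1) (S 1 (f 1))
        - hskew (j + 1) (h 2) (S 2 (f 2))
        - hskew j (g 0) (T 0 (h 0)) - hskew (j + 2) (g 1) (T 1 (h 1))
        - hskew (j + 1) (g 2) (T 2 (h 2))
        - hskew j (f 0) (R 0 (g 0)) - hskew (j + 2) (f 1) (R 1 (g 1))
        - hskew (j + 1) (f 2) (R 2 (g 2))
    · show (gBracket mul δ (gBracket mul δ (T, f) (S, g)) (R, h)).2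
          + (gBracket mul δ (gBracket mul δ (S, g) (R, h)) (T, f)).2
          + (gBracket mul δ (gBracket mul δ (R, h) (T, f)) (S, g)).2 = 0
      funext k
      rcases zcases k with rfl | rfl | rfl
      all_goals
        simp only [gBracket, Pi.add_apply, Pi.zero_apply, LieRing.lie_apply, sum3,
          map_add, map_sub, LinearMap.add_apply, LinearMap.sub_apply,
          Ring.lie_def, Pi.sub_apply, Pi.mul_apply, Module.End.mul_apply,
          z01, z02, z11, z12, z21, z22, w01, w02, w11, w12, w21, w22, sub_zero, sub_self]
      · simp only [PT, PS, PR, z01, z02, z11, z12, z21, z22]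
        simp only [hiv, hv]
        linear_combination (norm := abel) hiii (f 0) (g 0) (h 0)
      · simp only [PT, PS, PR, z01, z02, z11, z12, z21, z22]
        simp only [hiv, hv]
        linear_combination (norm := abel) hiii (f 1) (g 1) (h 1)
      · simp only [PT, PS, PR, z01, z02, z11, z12, z21, z22]
        simp only [hiv, hv]
        linear_combination (norm := abel) hiii (f 2) (g 2) (h 2)
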